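/- For each integer t ≥ 1 let N_t and V_t be random variables on a common probability space such that 0 ≤ N_t ≤ min(V_t, t) almost surely and V_t = 1 + B_t where B_t has the binomial distribution B(t,q) for a fixed q ∈ (0,1]. If lim_{t→∞} E[N_t]/t = L for some real L, then lim_{t→∞} E[N_t/V_t] = L/q. -/

import Mathlib

open MeasureTheory Filter
open scoped ProbabilityTheory

section Aux

lemma binom_sum_one (q : ℝ) (t : ℕ) :
    ∑ k ∈ Finset.range (t+1), (t.choose k : ℝ) * q ^ k * (1 - q) ^ (t - k) = 1 := by
  have := bernsteinPolynomial.sum ℝ t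
  apply_fun Polynomial.eval q at this
  simpa [bernsteinPolynomial, Polynomial.eval_finset_sum, mul_comm, mul_assoc,
    mul_left_comm] using this

lemma binom_var (q : ℝ) (t : ℕ) :
    ∑ k ∈ Finset.range (t+1),
        ((t:ℝ)*q - k) ^ 2 * ((t.choose k : ℝ) * q ^ k * (1 - q) ^ (t - k))
      = t * q * (1 - q) := by
  have := bernsteinPolynomial.variance ℝ t
  apply_fun Polynomial.eval q at this
  simpa [bernsteinPolynomial, Polynomial.eval_finset_sum, mul_comm, mul_assoc,
    mul_left_comm] using this

variable {Ω : Type*} [MeasureSpace Ω] [IsProbabilityMeasure (ℙ : Measure Ω)]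

lemma binom_ae_le (B : Ω → ℕ) (t : ℕ) (p : ℕ → ℝ)
    (hlaw : ∀ k, ℙ {ω | B ω = k} = ENNReal.ofReal (p k))
    (hz : ∀ k, t < k → p k = 0) :
    ∀ᵐ ω ∂(ℙ : Measure Ω), B ω ≤ t := by
  have hnull : (ℙ : Measure Ω) {ω | t < B ω} = 0 := by
    have hsub : {ω | t < B ω} ⊆ ⋃ k : ℕ, {ω | B ω = t + 1 + k} := by
      intro ω hω
      replace hω : t < B ω := hω
      exact Set.mem_iUnion.2 ⟨B ω - (t+1), by simp only [Set.mem_setOf_eq]; omega⟩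
    refine le_antisymm ((measure_mono hsub).trans ((measure_iUnion_le _).trans ?_)) zero_le
    have : ∀ k : ℕ, (ℙ : Measure Ω) {ω | B ω = t + 1 + k} = 0 := by
      intro k
      rw [hlaw, hz _ (by omega)]
      simp
    simp [this]
  rw [ae_iff]
  convert hnull using 2
  ext ω
  simp [not_le]

lemma integral_comp_binom (B : Ω → ℕ) (hB : Measurable B) (t : ℕ) (p : ℕ → ℝ)
    (hp : ∀ k, 0 ≤ p k)
    (hlaw : ∀ k, ℙ {ω | B ω = k} = ENNReal.ofReal (p k))
    (hz : ∀ k, t < k → p k = 0) (f : ℕ → ℝ) :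
    ∫ ω, f (B ω) = ∑ k ∈ Finset.range (t+1), f k * p k := by
  have hA : ∀ k : ℕ, MeasurableSet {ω | B ω = k} := fun k => hB (measurableSet_singleton k)
  have hae : ∀ᵐ ω ∂(ℙ : Measure Ω), B ω ≤ t := binom_ae_le B t p hlaw hz
  have haeq : (fun ω => f (B ω)) =ᵐ[(ℙ : Measure Ω)]
      (fun ω => ∑ k ∈ Finset.range (t+1),
        Set.indicator {ω' | B ω' = k} (fun _ => f k) ω) := by
    filter_upwards [hae] with ω hω
    rw [Finset.sum_eq_single (B ω)]
    · rw [Set.indicator_of_mem (by exact rfl)]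
    · intro b _ hb
      exact Set.indicator_of_notMem (fun h => hb (by simpa using h.symm)) _
    · intro h
      exact absurd (Finset.mem_range.2 (Nat.lt_succ_of_le hω)) h
  rw [integral_congr_ae haeq, integral_finset_sum]
  · refine Finset.sum_congr rfl fun k _ => ?_
    rw [integral_indicator_const (f k) (hA k), measureReal_def, hlaw, ENNReal.toReal_ofReal (hp k),
      smul_eq_mul, mul_comm]
  · intro k _
    exact (integrable_const (f k)).indicator (hA k)

end Aux

/-- For each `t ≥ 1` let `N t` and `V t` be random variables with
`0 ≤ N t ≤ min (V t) t` almost surely, where `V t = 1 + B t` and `B t ~ B(t, q)` for a fixed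
`q ∈ (0,1]`. If `E[N t] / t → L`, then `E[N t / V t] → L / q`. -/
theorem expectation_ratio_limit {Ω : Type*} [MeasureSpace Ω]
    [IsProbabilityMeasure (ℙ : Measure Ω)]
    (q : ℝ) (hq0 : 0 < q) (hq1 : q ≤ 1)
    (N : ℕ → Ω → ℝ) (B : ℕ → Ω → ℕ) (V : ℕ → Ω → ℕ)
    (hN : ∀ t, Measurable (N t)) (hB : ∀ t, Measurable (B t))
    (hV : ∀ t ω, V t ω = 1 + B t ω)
    (hlaw : ∀ t k : ℕ,
      ℙ {ω | B t ω = k} = ENNReal.ofReal ((t.choose k : ℝ) * q ^ k * (1 - q) ^ (t - k)))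
    (hbound : ∀ t : ℕ, 1 ≤ t →
      ∀ᵐ ω ∂(ℙ : Measure Ω), 0 ≤ N t ω ∧ N t ω ≤ min ((V t ω : ℝ)) (t : ℝ))
    (L : ℝ)
    (hlim : Filter.Tendsto (fun t : ℕ => (∫ ω, N t ω) / (t : ℝ)) Filter.atTop (nhds L)) :
    Filter.Tendsto (fun t : ℕ => ∫ ω, N t ω / (V t ω : ℝ)) Filter.atTop (nhds (L / q)) := by
  have h1q : 0 ≤ 1 - q := by linarith
  set p : ℕ → ℕ → ℝ := fun t k => (t.choose k : ℝ) * q ^ k * (1 - q) ^ (t - k) with hp_def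
  have hp : ∀ t k, 0 ≤ p t k := fun t k =>
    mul_nonneg (mul_nonneg (Nat.cast_nonneg _) (pow_nonneg hq0.le _)) (pow_nonneg h1q _)
  have hz : ∀ t k, t < k → p t k = 0 := by
    intro t k hk
    simp [hp_def, Nat.choose_eq_zero_of_lt hk]
  -- measurability of V as real-valued
  have hVmeas : ∀ t, Measurable (fun ω => ((V t ω : ℕ) : ℝ)) := by
    intro t
    have : Measurable (V t) := by
      have : V t = fun ω => 1 + B t ω := funext (hV t)
      rw [this]; exact measurable_const.add (hB t)
    exact measurable_from_top.comp this
  have hV1 : ∀ t ω, (1:ℝ) ≤ (V t ω : ℝ) := by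
    intro t ω
    have := hV t ω
    exact_mod_cast Nat.one_le_iff_ne_zero.2 (by omega)
  -- expected absolute deviation bound
  have habs : ∀ t : ℕ, (∫ ω, |(B t ω : ℝ) - q * t|) ≤ Real.sqrt t := by
    intro t
    rw [integral_comp_binom (B t) (hB t) t (p t) (hp t) (hlaw t) (hz t)
      (fun k => |(k : ℝ) - q * t|)]
    have hCS := Real.sum_mul_le_sqrt_mul_sqrt (Finset.range (t+1))
      (fun k => |(k : ℝ) - q * t| * Real.sqrt (p t k)) (fun k => Real.sqrt (p t k))
    have he1 : ∀ k ∈ Finset.range (t+1),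
        |(k : ℝ) - q * t| * Real.sqrt (p t k) * Real.sqrt (p t k)
          = |(k : ℝ) - q * t| * p t k := by
      intro k _
      rw [mul_assoc, Real.mul_self_sqrt (hp t k)]
    have he2 : ∀ k ∈ Finset.range (t+1),
        (|(k : ℝ) - q * t| * Real.sqrt (p t k)) ^ 2 = ((t:ℝ)*q - k)^2 * p t k := by
      intro k _
      rw [mul_pow, Real.sq_sqrt (hp t k), sq_abs]
      ring
    have he3 : ∀ k ∈ Finset.range (t+1), (Real.sqrt (p t k)) ^ 2 = p t k := by
      intro k _; exact Real.sq_sqrt (hp t k)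
    rw [Finset.sum_congr rfl he1, Finset.sum_congr rfl he2, Finset.sum_congr rfl he3] at hCS
    rw [binom_var q t, binom_sum_one q t, Real.sqrt_one, mul_one] at hCS
    refine hCS.trans (Real.sqrt_le_sqrt ?_)
    have : q * (1 - q) ≤ 1 := by nlinarith
    nlinarith [Nat.cast_nonneg (α := ℝ) t]
  -- integrabilities and key estimate for each t ≥ 1
  have key : ∀ t : ℕ, 1 ≤ t →
      |(∫ ω, N t ω / (V t ω : ℝ)) - (∫ ω, N t ω) / (q * (t+1))|
        ≤ (Real.sqrt t + 1) / (q * (t+1)) := by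
    intro t ht
    set c : ℝ := q * (t + 1) with hc_def
    have hc : 0 < c := by positivity
    have haeB : ∀ᵐ ω ∂(ℙ : Measure Ω), B t ω ≤ t := binom_ae_le (B t) t (p t) (hlaw t) (hz t)
    have hintN : Integrable (N t) := by
      refine (integrable_const ((t:ℝ))).mono' (hN t).aestronglyMeasurable ?_
      filter_upwards [hbound t ht] with ω hω
      rw [Real.norm_eq_abs, abs_of_nonneg hω.1]
      exact hω.2.trans (min_le_right _ _)
    have hintNV : Integrable (fun ω => N t ω / (V t ω : ℝ)) := by
      refine (integrable_const (1:ℝ)).mono'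
        ((hN t).div (hVmeas t)).aestronglyMeasurable ?_
      filter_upwards [hbound t ht] with ω hω
      have h0 : (0:ℝ) < (V t ω : ℝ) := lt_of_lt_of_le one_pos (hV1 t ω)
      rw [Real.norm_eq_abs, abs_of_nonneg (div_nonneg hω.1 h0.le)]
      exact (div_le_one h0).2 (hω.2.trans (min_le_left _ _))
    have hintAbs : Integrable (fun ω => |(B t ω : ℝ) - q * t|) := by
      refine (integrable_const ((t:ℝ) + q * t)).mono'
        (((measurable_from_top.comp (hB t)).sub measurable_const).abs).aestronglyMeasurable ?_
      filter_upwards [haeB] with ω hω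
      rw [Real.norm_eq_abs, abs_abs]
      have h1 : ((B t ω : ℝ)) ≤ t := by exact_mod_cast hω
      have h2 : (0:ℝ) ≤ (B t ω : ℝ) := Nat.cast_nonneg _
      have h3 : 0 ≤ q * t := by positivity
      rw [abs_le]
      constructor <;> nlinarith
    have hintBound : Integrable (fun ω => (|(B t ω : ℝ) - q * t| + 1) / c) :=
      (hintAbs.add (integrable_const 1)).div_const c
    -- pointwise a.e. bound
    have hptwise : ∀ᵐ ω ∂(ℙ : Measure Ω),
        ‖N t ω / (V t ω : ℝ) - N t ω / c‖ ≤ (|(B t ω : ℝ) - q * t| + 1) / c := by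
      filter_upwards [hbound t ht] with ω hω
      have hVpos : (0:ℝ) < (V t ω : ℝ) := lt_of_lt_of_le one_pos (hV1 t ω)
      have hNV : N t ω / (V t ω : ℝ) ≤ 1 :=
        (div_le_one hVpos).2 (hω.2.trans (min_le_left _ _))
      have hNVnn : 0 ≤ N t ω / (V t ω : ℝ) := div_nonneg hω.1 hVpos.le
      have heq : N t ω / (V t ω : ℝ) - N t ω / c
          = (N t ω / (V t ω : ℝ)) * ((c - (V t ω : ℝ)) / c) := by
        field_simp
      rw [Real.norm_eq_abs, heq, abs_mul, abs_of_nonneg hNVnn, abs_div, abs_of_pos hc]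
      have hVc : |c - (V t ω : ℝ)| ≤ |(B t ω : ℝ) - q * t| + 1 := by
        have hVeq : ((V t ω : ℕ) : ℝ) = 1 + (B t ω : ℝ) := by
          rw [hV t ω]; push_cast; ring
        have : c - (V t ω : ℝ) = -(((B t ω : ℝ) - q * t) + (1 - q)) := by
          rw [hVeq, hc_def]; ring
        rw [this, abs_neg]
        calc |((B t ω : ℝ) - q * t) + (1 - q)|
            ≤ |(B t ω : ℝ) - q * t| + |1 - q| := abs_add_le _ _
          _ ≤ |(B t ω : ℝ) - q * t| + 1 := by
              rw [abs_of_nonneg h1q]; linarith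
      calc N t ω / (V t ω : ℝ) * (|c - (V t ω : ℝ)| / c)
          ≤ 1 * (|c - (V t ω : ℝ)| / c) :=
            mul_le_mul_of_nonneg_right hNV (div_nonneg (abs_nonneg _) hc.le)
        _ = |c - (V t ω : ℝ)| / c := one_mul _
        _ ≤ (|(B t ω : ℝ) - q * t| + 1) / c := by gcongr
    have hsplit : ∫ ω, (N t ω / (V t ω : ℝ) - N t ω / c)
        = (∫ ω, N t ω / (V t ω : ℝ)) - (∫ ω, N t ω) / c := by
      rw [integral_sub hintNV (hintN.div_const c), integral_div]
    rw [← hsplit, ← Real.norm_eq_abs]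
    refine (norm_integral_le_of_norm_le hintBound hptwise).trans ?_
    have hib : ∫ ω, (|(B t ω : ℝ) - q * t| + 1) / c
        = ((∫ ω, |(B t ω : ℝ) - q * t|) + 1) / c := by
      rw [integral_div, integral_add hintAbs (integrable_const 1), integral_const]
      simp
    rw [hib]
    gcongr
    exact habs t
  -- the main term tends to L/q
  have hg : Tendsto (fun t : ℕ => (∫ ω, N t ω) / (q * (t+1))) atTop (nhds (L / q)) := by
    have h1 : Tendsto (fun t : ℕ => ((∫ ω, N t ω) / t) * ((t:ℝ) / ((t:ℝ)+1) * (1/q)))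
        atTop (nhds (L * (1 * (1/q)))) :=
      hlim.mul ((tendsto_natCast_div_add_atTop (1:ℝ)).mul tendsto_const_nhds)
    have h2 : L * (1 * (1/q)) = L / q := by field_simp
    rw [h2] at h1
    refine h1.congr' ?_
    filter_upwards [eventually_ge_atTop 1] with t ht
    have ht0 : (0:ℝ) < t := by exact_mod_cast ht
    have h1 : (t:ℝ) ≠ 0 := ht0.ne'
    field_simp
  -- the error term tends to 0
  have herr : Tendsto (fun t : ℕ => (∫ ω, N t ω / (V t ω : ℝ)) - (∫ ω, N t ω) / (q * (t+1)))
      atTop (nhds 0) := by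
    have hb0 : Tendsto (fun t : ℕ => ((t:ℝ)) ^ (-(1/2) : ℝ)) atTop (nhds 0) :=
      (tendsto_rpow_neg_atTop (by norm_num : (0:ℝ) < 1/2)).comp tendsto_natCast_atTop_atTop
    have hb : Tendsto (fun t : ℕ => (2/q) * ((t:ℝ) ^ (-(1/2) : ℝ))) atTop (nhds 0) := by
      simpa using tendsto_const_nhds.mul hb0
    refine squeeze_zero_norm' ?_ hb
    filter_upwards [eventually_ge_atTop 1] with t ht
    have hs1 : 1 ≤ Real.sqrt t := Real.one_le_sqrt.2 (by exact_mod_cast ht)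
    have ht0 : (0:ℝ) < t := by exact_mod_cast ht
    have hsq : Real.sqrt t * Real.sqrt t = t := Real.mul_self_sqrt ht0.le
    have hrw : ((t:ℝ)) ^ (-(1/2) : ℝ) = (Real.sqrt t)⁻¹ := by
      rw [Real.rpow_neg ht0.le, ← Real.sqrt_eq_rpow]
    rw [Real.norm_eq_abs]
    refine (key t ht).trans ?_
    have step1 : (Real.sqrt t + 1) / (q * ((t:ℝ)+1)) ≤ (2 * Real.sqrt t) / (q * t) :=
      div_le_div₀ (by positivity) (by linarith) (by positivity) (by nlinarith)
    have step2 : (2 * Real.sqrt t) / (q * (t:ℝ)) = 2/q * (Real.sqrt t)⁻¹ := by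
      have hs0 : Real.sqrt t ≠ 0 := by positivity
      rw [← hsq]
      field_simp
      rw [Real.sqrt_sq (Real.sqrt_nonneg _)]
    rw [hrw]
    exact step1.trans (le_of_eq step2)
  have hfin := hg.add herr
  rw [add_zero] at hfin
  exact hfin.congr (fun t => by ring)
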